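/- Triviality of the curve-preserving group and inhomogeneity of the curve x⁴ − x²y² + (2/(3√3))xy³ = 1: if A ∈ GL(2,ℝ) satisfies A(H_{2/(3√3),0}) = H_{2/(3√3),0}, then A is the identity matrix. In particular H_{2/(3√3),0} is not a homogeneous space: the group of linear transformations preserving it does not act transitively on it. -/

import Mathlib

/-!
Common definitions: the quartic polynomial `hLK L K (x,y) = x⁴ − x²y² + L·x·y³ + K·y⁴` on ℝ²,
the Hessian determinant of a function on ℝ², and the curve `Hcurve L K = H_{L,K}`,
the connected component containing (1,0) of the hyperbolic points on the level set {h = 1}.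
-/

noncomputable section
open Matrix

/-- `h_{L,K}(x,y) = x⁴ − x²y² + L·x·y³ + K·y⁴`. -/
def hLK (L K : ℝ) (v : Fin 2 → ℝ) : ℝ :=
  v 0 ^ 4 - v 0 ^ 2 * v 1 ^ 2 + L * v 0 * v 1 ^ 3 + K * v 1 ^ 4

/-- Determinant of the Hessian matrix of `f : ℝ² → ℝ` at `p`. -/
def hessDet2 (f : (Fin 2 → ℝ) → ℝ) (p : Fin 2 → ℝ) : ℝ :=
  Matrix.det (Matrix.of fun i j : Fin 2 =>
    iteratedFDeriv ℝ 2 f p ![Pi.single i 1, Pi.single j 1])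

/-- `H_{L,K}`: the connected component containing `(1,0)` of
`{p ∈ ℝ² : h_{L,K}(p) = 1 and p is a hyperbolic point of h_{L,K}}`. -/
def Hcurve (L K : ℝ) : Set (Fin 2 → ℝ) :=
  connectedComponentIn {p | hLK L K p = 1 ∧ hessDet2 (hLK L K) p < 0} ![1, 0]

section calc1
variable (L : ℝ)

def d1c (L : ℝ) (v : Fin 2 → ℝ) : (Fin 2 → ℝ) →L[ℝ] ℝ :=
  (4*v 0^3 - 2*v 0*v 1^2 + L*v 1^3) • ContinuousLinearMap.proj 0
    + (-2*v 0^2*v 1 + 3*L*v 0*v 1^2) • ContinuousLinearMap.proj 1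

lemma hasF1 (v : Fin 2 → ℝ) : HasFDerivAt (hLK L 0) (d1c L v) v := by
  have h0 : HasFDerivAt (fun u : Fin 2 → ℝ => u 0)
      (ContinuousLinearMap.proj (R := ℝ) (φ := fun _ : Fin 2 => ℝ) 0) v :=
    hasFDerivAt_apply 0 v
  have h1 : HasFDerivAt (fun u : Fin 2 → ℝ => u 1)
      (ContinuousLinearMap.proj (R := ℝ) (φ := fun _ : Fin 2 => ℝ) 1) v :=
    hasFDerivAt_apply 1 v
  have hbig := ((((h0.mul h0).mul (h0.mul h0)).sub ((h0.mul h0).mul (h1.mul h1))).add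
      ((h0.const_mul L).mul (h1.mul (h1.mul h1)))).add
      (((h1.mul h1).mul (h1.mul h1)).const_mul 0)
  refine HasFDerivAt.congr_of_eventuallyEq (hbig.congr_fderiv ?_)
    (Filter.Eventually.of_forall fun u => ?_)
  · apply ContinuousLinearMap.ext; intro w
    simp [d1c, ContinuousLinearMap.smul_apply, ContinuousLinearMap.add_apply,
      ContinuousLinearMap.sub_apply]
    ring
  · simp only [hLK, Pi.mul_apply, Pi.add_apply, Pi.sub_apply]; ring
end calc1

section calc2
variable (L : ℝ)

def grad1 (L : ℝ) (p : Fin 2 → ℝ) : (Fin 2 → ℝ) →L[ℝ] ℝ :=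
  (12*p 0^2 - 2*p 1^2) • ContinuousLinearMap.proj 0
    + (-4*p 0*p 1 + 3*L*p 1^2) • ContinuousLinearMap.proj 1

def grad2 (L : ℝ) (p : Fin 2 → ℝ) : (Fin 2 → ℝ) →L[ℝ] ℝ :=
  (-4*p 0*p 1 + 3*L*p 1^2) • ContinuousLinearMap.proj 0
    + (-2*p 0^2 + 6*L*p 0*p 1) • ContinuousLinearMap.proj 1

def d2c (L : ℝ) (p : Fin 2 → ℝ) : (Fin 2 → ℝ) →L[ℝ] ((Fin 2 → ℝ) →L[ℝ] ℝ) :=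
  (grad1 L p).smulRight (ContinuousLinearMap.proj (R := ℝ) (φ := fun _ : Fin 2 => ℝ) 0)
  + (grad2 L p).smulRight (ContinuousLinearMap.proj (R := ℝ) (φ := fun _ : Fin 2 => ℝ) 1)

lemma fderiv_hLK : fderiv ℝ (hLK L 0) = d1c L := by
  funext v; exact (hasF1 L v).fderiv

lemma hasF2 (p : Fin 2 → ℝ) : HasFDerivAt (d1c L) (d2c L p) p := by
  have h0 : HasFDerivAt (fun u : Fin 2 → ℝ => u 0)
      (ContinuousLinearMap.proj (R := ℝ) (φ := fun _ : Fin 2 => ℝ) 0) p :=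
    hasFDerivAt_apply 0 p
  have h1 : HasFDerivAt (fun u : Fin 2 → ℝ => u 1)
      (ContinuousLinearMap.proj (R := ℝ) (φ := fun _ : Fin 2 => ℝ) 1) p :=
    hasFDerivAt_apply 1 p
  have hc1 : HasFDerivAt (fun v : Fin 2 → ℝ => 4*v 0^3 - 2*v 0*v 1^2 + L*v 1^3)
      (grad1 L p) p := by
    have hbig := ((((h0.mul h0).mul h0).const_mul 4).sub
        (((h0.mul h1).mul h1).const_mul 2)).add (((h1.mul h1).mul h1).const_mul L)
    refine HasFDerivAt.congr_of_eventuallyEq (hbig.congr_fderiv ?_)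
      (Filter.Eventually.of_forall fun u => ?_)
    · apply ContinuousLinearMap.ext; intro w
      simp [grad1, grad2, ContinuousLinearMap.smul_apply, ContinuousLinearMap.add_apply,
        ContinuousLinearMap.sub_apply]
      ring
    · simp only [Pi.mul_apply, Pi.add_apply, Pi.sub_apply]; ring
  have hc2 : HasFDerivAt (fun v : Fin 2 → ℝ => -2*v 0^2*v 1 + 3*L*v 0*v 1^2)
      (grad2 L p) p := by
    have hbig := ((((h0.mul h0).mul h1).const_mul (-2)).add
        (((h0.mul h1).mul h1).const_mul (3*L)))
    refine HasFDerivAt.congr_of_eventuallyEq (hbig.congr_fderiv ?_)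
      (Filter.Eventually.of_forall fun u => ?_)
    · apply ContinuousLinearMap.ext; intro w
      simp [grad1, grad2, ContinuousLinearMap.smul_apply, ContinuousLinearMap.add_apply,
        ContinuousLinearMap.sub_apply]
      ring
    · simp only [Pi.mul_apply, Pi.add_apply, Pi.sub_apply]; ring
  have hbig := (hc1.smul_const (ContinuousLinearMap.proj (R := ℝ) (φ := fun _ : Fin 2 => ℝ) 0)).add
      (hc2.smul_const (ContinuousLinearMap.proj (R := ℝ) (φ := fun _ : Fin 2 => ℝ) 1))
  exact hbig

lemma hess_formula (p : Fin 2 → ℝ) :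
    hessDet2 (hLK L 0) p =
      (12*p 0^2 - 2*p 1^2) * (-2*p 0^2 + 6*L*p 0*p 1) - (-4*p 0*p 1 + 3*L*p 1^2)^2 := by
  have h2 : fderiv ℝ (fderiv ℝ (hLK L 0)) p = d2c L p := by
    rw [fderiv_hLK]; exact (hasF2 L p).fderiv
  have key : ∀ i j : Fin 2,
      iteratedFDeriv ℝ 2 (hLK L 0) p ![Pi.single i 1, Pi.single j 1]
        = d2c L p (Pi.single i 1) (Pi.single j 1) := by
    intro i j
    rw [iteratedFDeriv_two_apply, h2]
    simp
  unfold hessDet2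
  rw [Matrix.det_fin_two]
  simp only [Matrix.of_apply, key]
  simp [d2c, grad1, grad2, ContinuousLinearMap.smul_apply, ContinuousLinearMap.add_apply,
    ContinuousLinearMap.smulRight_apply, ContinuousLinearMap.proj_apply,
    Pi.single_apply]
  ring
end calc2

section curve
open Set

lemma sq3_sq : Real.sqrt 3 ^ 2 = 3 := Real.sq_sqrt (by norm_num)
lemma sq3_pos : 0 < Real.sqrt 3 := Real.sqrt_pos.2 (by norm_num)
lemma sq3_gt1 : 1 < Real.sqrt 3 := by nlinarith [sq3_sq, sq3_pos]
lemma sq3_lt2 : Real.sqrt 3 < 1.8 := by nlinarith [sq3_sq, sq3_pos]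
lemma Lval : (2 / (3 * Real.sqrt 3) : ℝ) = 2 * Real.sqrt 3 / 9 := by
  have h := sq3_sq
  have h0 := sq3_pos.ne'
  field_simp
  nlinarith [sq3_sq]

def Hcurve' (L K : ℝ) : Set (Fin 2 → ℝ) :=
  connectedComponentIn {p | hLK L K p = 1 ∧ hessDet2 (hLK L K) p < 0} ![1, 0]

def Sset : Set (Fin 2 → ℝ) :=
  {p | hLK (2 / (3 * Real.sqrt 3)) 0 p = 1 ∧ hessDet2 (hLK (2 / (3 * Real.sqrt 3)) 0) p < 0}

def gfun (t : ℝ) : ℝ := 1 - t^2 + (2 * Real.sqrt 3 / 9) * t^3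

def xf (t : ℝ) : ℝ := (Real.sqrt (Real.sqrt (gfun t)))⁻¹

def Phi (t : ℝ) : Fin 2 → ℝ := ![xf t, t * xf t]

lemma gpos {t : ℝ} (ht : t ∈ Icc (0:ℝ) 1) : 0 < gfun t := by
  obtain ⟨h0, h1⟩ := ht
  have hw := sq3_gt1
  unfold gfun
  nlinarith [mul_nonneg (sub_nonneg.2 h1) (by nlinarith : (0:ℝ) ≤ 7 + 7*t - 2*t^2),
    mul_nonneg (mul_nonneg (mul_nonneg h0 h0) h0) (sub_nonneg.2 hw.le)]

lemma xf_pos {t : ℝ} (ht : t ∈ Icc (0:ℝ) 1) : 0 < xf t := by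
  have := gpos ht
  exact inv_pos.2 (Real.sqrt_pos.2 (Real.sqrt_pos.2 this))

lemma xf_quart {t : ℝ} (ht : t ∈ Icc (0:ℝ) 1) :
    xf t ^ 4 * (1 - t^2 + (2 * Real.sqrt 3 / 9) * t^3) = 1 := by
  have hg := gpos ht
  have h1 : Real.sqrt (gfun t) ^ 2 = gfun t := Real.sq_sqrt (Real.sqrt_nonneg _) ▸ Real.sq_sqrt hg.le
  have h2 : Real.sqrt (Real.sqrt (gfun t)) ^ 2 = Real.sqrt (gfun t) :=
    Real.sq_sqrt (Real.sqrt_nonneg _)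
  have hy : Real.sqrt (Real.sqrt (gfun t)) ^ 4 = gfun t := by
    rw [show (4:ℕ) = 2*2 from rfl, pow_mul, h2, h1]
  have hx4 : xf t ^ 4 = (gfun t)⁻¹ := by
    unfold xf; rw [inv_pow, hy]
  rw [show (1 - t^2 + (2 * Real.sqrt 3 / 9) * t^3) = gfun t from rfl, hx4,
    inv_mul_cancel₀ hg.ne']

lemma hLK_Phi {t : ℝ} (ht : t ∈ Icc (0:ℝ) 1) :
    hLK (2 / (3 * Real.sqrt 3)) 0 (Phi t) = 1 := by
  have h4 := xf_quart ht
  simp only [hLK, Phi, Matrix.cons_val_zero, Matrix.cons_val_one, Matrix.head_cons, Lval]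
  linear_combination h4

lemma hess_Phi {t : ℝ} (ht : t ∈ Icc (0:ℝ) 1) :
    hessDet2 (hLK (2 / (3 * Real.sqrt 3)) 0) (Phi t) < 0 := by
  rw [hess_formula]
  simp only [Phi, Matrix.cons_val_zero, Matrix.cons_val_one, Matrix.head_cons, Lval]
  have key : (12*(xf t)^2 - 2*(t*xf t)^2) * (-2*(xf t)^2 + 6*(2*Real.sqrt 3/9)*(xf t)*(t*xf t))
      - (-4*(xf t)*(t*xf t) + 3*(2*Real.sqrt 3/9)*(t*xf t)^2)^2
      = (xf t)^4 * (-24 + 16*Real.sqrt 3*t - 12*t^2 + (8*Real.sqrt 3/3)*t^3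
          - (4*(Real.sqrt 3)^2/9)*t^4) := by ring
  rw [key]
  apply mul_neg_of_pos_of_neg (pow_pos (xf_pos ht) 4)
  obtain ⟨h0, h1⟩ := ht
  have e2 : -24 + 16*Real.sqrt 3*t - 12*t^2 + (8*Real.sqrt 3/3)*t^3 - (4*(Real.sqrt 3)^2/9)*t^4
      = -(4/3)*(t - Real.sqrt 3)^2*(t^2+6) + (8 + (4/3)*t^2 - (4/9)*t^4)*(Real.sqrt 3^2 - 3) := by
    ring
  rw [e2, sq3_sq]
  have hts : t - Real.sqrt 3 ≤ 1 - Real.sqrt 3 := by linarith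
  have h2 : (t - Real.sqrt 3)^2 ≥ (1 - Real.sqrt 3)^2 := by
    nlinarith [sq3_gt1]
  nlinarith [sq3_sq, sq3_gt1, sq3_lt2, sq_nonneg t]
end curve

section topo
open Set

lemma base_mem : ![1, 0] ∈ Sset := by
  constructor
  · simp [hLK]
  · rw [hess_formula]
    norm_num

lemma contPhi : ContinuousOn Phi (Icc (0:ℝ) 1) := by
  have hxf : ContinuousOn xf (Icc (0:ℝ) 1) := by
    apply ContinuousOn.inv₀
    · exact (Real.continuous_sqrt.comp (Real.continuous_sqrt.comp
        (by unfold gfun; continuity))).continuousOn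
    · intro t ht
      exact (Real.sqrt_pos.2 (Real.sqrt_pos.2 (gpos ht))).ne'
  rw [continuousOn_pi]
  intro i
  fin_cases i
  · simpa [Phi] using hxf
  · exact (continuousOn_id.mul hxf).congr (fun t _ => by simp [Phi])

lemma Phi_zero : Phi 0 = ![1, 0] := by
  have : gfun 0 = 1 := by norm_num [gfun]
  funext i
  fin_cases i
  · simp [Phi, xf, this]
  · simp [Phi]

lemma Phi_mem_H {t : ℝ} (ht : t ∈ Icc (0:ℝ) 1) :
    Phi t ∈ connectedComponentIn Sset ![1, 0] := by
  have harc : IsPreconnected (Phi '' Icc (0:ℝ) 1) :=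
    (isPreconnected_Icc).image Phi contPhi
  have hmem : ![1, 0] ∈ Phi '' Icc (0:ℝ) 1 :=
    ⟨0, ⟨le_refl 0, zero_le_one⟩, Phi_zero⟩
  have hsub : Phi '' Icc (0:ℝ) 1 ⊆ Sset := by
    rintro _ ⟨u, hu, rfl⟩
    exact ⟨hLK_Phi hu, hess_Phi hu⟩
  exact harc.subset_connectedComponentIn hmem hsub (mem_image_of_mem Phi ht)

lemma H_subset : connectedComponentIn Sset ![1, 0] ⊆ Sset :=
  connectedComponentIn_subset _ _

lemma base_mem_H : ![1, 0] ∈ connectedComponentIn Sset ![1, 0] :=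
  mem_connectedComponentIn base_mem

lemma ne_zero_fst {p : Fin 2 → ℝ} (hp : p ∈ Sset) : p 0 ≠ 0 := by
  intro h0
  have := hp.1
  rw [hLK] at this
  rw [h0] at this
  norm_num at this

lemma pos_fst {p : Fin 2 → ℝ} (hp : p ∈ connectedComponentIn Sset ![1, 0]) : 0 < p 0 := by
  rcases lt_trichotomy (p 0) 0 with hneg | hz | hpos
  · exfalso
    have hser := (isPreconnected_connectedComponentIn
      (F := Sset) (x := ![1, 0])).intermediate_value hp base_mem_H
      ((continuous_apply 0).continuousOn)
    have : (0:ℝ) ∈ Icc (p 0) (![1, 0] 0) := by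
      constructor
      · exact hneg.le
      · simp
    obtain ⟨q, hq, hq0⟩ := hser this
    exact ne_zero_fst (H_subset hq) hq0
  · exact absurd hz (ne_zero_fst (H_subset hp))
  · exact hpos

lemma slope_ne {q : Fin 2 → ℝ} (hq : q ∈ Sset) : q 1 - Real.sqrt 3 * q 0 ≠ 0 := by
  intro h0
  have hq1 : q 1 = Real.sqrt 3 * q 0 := by linarith
  have hd := hq.2
  rw [hess_formula, hq1, Lval] at hd
  have : (12*(q 0)^2 - 2*(Real.sqrt 3 * q 0)^2) *
      (-2*(q 0)^2 + 6*(2*Real.sqrt 3/9)*(q 0)*(Real.sqrt 3 * q 0))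
      - (-4*(q 0)*(Real.sqrt 3 * q 0) + 3*(2*Real.sqrt 3/9)*(Real.sqrt 3 * q 0)^2)^2 = 0 := by
    linear_combination (8*(q 0)^4 + (4/3)*(Real.sqrt 3)^2*(q 0)^4
      - (4/9)*(Real.sqrt 3)^4*(q 0)^4) * sq3_sq
  rw [this] at hd
  exact lt_irrefl 0 hd

lemma slope_lt {p : Fin 2 → ℝ} (hp : p ∈ connectedComponentIn Sset ![1, 0]) :
    p 1 < Real.sqrt 3 * p 0 := by
  by_contra hge
  push_neg at hge
  have hf : ContinuousOn (fun v : Fin 2 → ℝ => v 1 - Real.sqrt 3 * v 0)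
      (connectedComponentIn Sset ![1, 0]) :=
    ((continuous_apply 1).sub (continuous_const.mul (continuous_apply 0))).continuousOn
  have hser := (isPreconnected_connectedComponentIn
      (F := Sset) (x := ![1, 0])).intermediate_value base_mem_H hp hf
  have hbase : (![1, 0] : Fin 2 → ℝ) 1 - Real.sqrt 3 * ![1, 0] 0 = -Real.sqrt 3 := by
    simp
  have h0mem : (0:ℝ) ∈ Icc ((![1, 0] : Fin 2 → ℝ) 1 - Real.sqrt 3 * ![1, 0] 0)
      (p 1 - Real.sqrt 3 * p 0) := by
    rw [hbase]
    constructor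
    · linarith [sq3_pos]
    · linarith
  obtain ⟨q, hq, hq0⟩ := hser h0mem
  exact slope_ne (H_subset hq) hq0
end topo

set_option maxHeartbeats 1600000 in
lemma algMain (w pa qa ra sa : ℝ) (hw : w^2 = 3) (hwpos : 0 < w)
    (hdet : pa * sa - qa * ra ≠ 0)
    (hApos : 0 < pa) (hAr : ra < w * pa)
    (e0 : pa^4 - pa^2*ra^2 + (2/9)*w*pa*ra^3 - 1 = 0)
    (e1 : 4*pa^3*qa - 2*pa*qa*ra^2 - 2*pa^2*ra*sa + (2/9)*w*qa*ra^3
      + (2/3)*w*pa*ra^2*sa = 0)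
    (e2 : 6*pa^2*qa^2 - qa^2*ra^2 - 4*pa*qa*ra*sa - pa^2*sa^2
      + (2/3)*w*qa*ra^2*sa + (2/3)*w*pa*ra*sa^2 + 1 = 0)
    (e3 : 4*pa*qa^3 - 2*qa^2*ra*sa - 2*pa*qa*sa^2 + (2/3)*w*qa*ra*sa^2
      + (2/9)*w*pa*sa^3 - (2/9)*w = 0)
    (e4 : qa^4 - qa^2*sa^2 + (2/9)*w*qa*sa^3 = 0) :
    pa = 1 ∧ qa = 0 ∧ ra = 0 ∧ sa = 1 := by
  have M : ∀ x y : ℝ,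
      (pa*x + qa*y)^4 - (pa*x + qa*y)^2*(ra*x + sa*y)^2
        + (2*w/9)*(pa*x + qa*y)*(ra*x + sa*y)^3
      = x^4 - x^2*y^2 + (2*w/9)*x*y^3 := by
    intro x y
    linear_combination x^4*e0 + x^3*y*e1 + x^2*y^2*e2 + x*y^3*e3 + y^4*e4
  -- gradient of h vanishes at A(1,√3)
  have hD1 : (4*(pa + w*qa)^3 - 2*(pa + w*qa)*(ra + w*sa)^2
        + (2*w/9)*(ra + w*sa)^3)*pa
      + (-2*(pa + w*qa)^2*(ra + w*sa)
        + (2*w/3)*(pa + w*qa)*(ra + w*sa)^2)*ra = 0 := by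
    linear_combination (8/12)*M 2 (w) - (8/12)*M 0 (w)
      - (1/12)*M 3 (w) + (1/12)*M (-1) (w)
      + (-4/3 + (2/9)*w^2)*hw
  have hD2 : (4*(pa + w*qa)^3 - 2*(pa + w*qa)*(ra + w*sa)^2
        + (2*w/9)*(ra + w*sa)^3)*qa
      + (-2*(pa + w*qa)^2*(ra + w*sa)
        + (2*w/3)*(pa + w*qa)*(ra + w*sa)^2)*sa = 0 := by
    linear_combination (8/12)*M 1 (w + 1) - (8/12)*M 1 (w - 1)
      - (1/12)*M 1 (w + 2) + (1/12)*M 1 (w - 2)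
      + ((2/3)*w)*hw
  have hGx : 4*(pa + w*qa)^3 - 2*(pa + w*qa)*(ra + w*sa)^2
      + (2*w/9)*(ra + w*sa)^3 = 0 := by
    have hh : (4*(pa + w*qa)^3 - 2*(pa + w*qa)*(ra + w*sa)^2
        + (2*w/9)*(ra + w*sa)^3) * (pa*sa - qa*ra) = 0 := by
      linear_combination sa*hD1 - ra*hD2
    exact (mul_eq_zero.mp hh).resolve_right hdet
  have hGy : -2*(pa + w*qa)^2*(ra + w*sa)
      + (2*w/3)*(pa + w*qa)*(ra + w*sa)^2 = 0 := by
    have hh : (-2*(pa + w*qa)^2*(ra + w*sa)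
        + (2*w/3)*(pa + w*qa)*(ra + w*sa)^2) * (pa*sa - qa*ra) = 0 := by
      linear_combination pa*hD2 - qa*hD1
    exact (mul_eq_zero.mp hh).resolve_right hdet
  have hAL0 : pa + w*qa = 0 → False := by
    intro h0
    have hBE3 : (2*w/9)*(ra + w*sa)^3 = 0 := by
      linear_combination hGx + (-4*(pa + w*qa)^2 + 2*(ra + w*sa)^2)*h0
    have hBE : ra + w*sa = 0 := by
      rcases mul_eq_zero.mp hBE3 with h | h
      · exfalso; have := hwpos; nlinarith
      · exact pow_eq_zero_iff (by norm_num) |>.mp h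
    exact hdet (by linear_combination sa*h0 - qa*hBE)
  have hBE0 : ra + w*sa = 0 → False := by
    intro h0
    apply hAL0
    have h3 : 4*(pa + w*qa)^3 = 0 := by
      linear_combination hGx + (2*(pa + w*qa)*(ra + w*sa)
        - (2*w/9)*(ra + w*sa)^2)*h0
    have h3' : (pa + w*qa)^3 = 0 := by linarith
    exact pow_eq_zero_iff (by norm_num) |>.mp h3'
  have hbeta : ra + w*sa = w*(pa + w*qa) := by
    have h2w : 2*w/3 * ((pa + w*qa)*(ra + w*sa)
        *((ra + w*sa) - w*(pa + w*qa))) = 0 := by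
      linear_combination hGy + ((-2/3)*qa^2*sa*w^3 + (-2/3)*qa^2*ra*w^2
        + (-4/3)*pa*qa*sa*w^2 + (-4/3)*pa*qa*ra*w
        + (-2/3)*pa^2*sa*w + (-2/3)*pa^2*ra)*hw
    rcases mul_eq_zero.mp h2w with h | h
    · exfalso; have := hwpos; nlinarith
    · rcases mul_eq_zero.mp h with h' | h'
      · rcases mul_eq_zero.mp h' with h'' | h''
        · exact (hAL0 h'').elim
        · exact (hBE0 h'').elim
      · linarith
  -- null directions
  have hqfact : (qa*(3*qa - w*sa)^2)*(3*qa + 2*w*sa) = 0 := by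
    linear_combination 27*e4 + (2*qa*sa^3*w - 9*qa^2*sa^2)*hw
  have hw3 : (2*pa - w*qa)^4 - (2*pa - w*qa)^2*(2*ra - w*sa)^2
      + (2*w/9)*(2*pa - w*qa)*(2*ra - w*sa)^3 = 0 := by
    linear_combination M 2 (-w) + (-16/3 - (4/9)*w^2)*hw
  have hufact : ((2*pa - w*qa)*(3*(2*pa - w*qa)
        - w*(2*ra - w*sa))^2)
      *(3*(2*pa - w*qa) + 2*w*(2*ra - w*sa)) = 0 := by
    linear_combination 27*hw3 + (2*qa*sa^3*w^5 - 12*qa*ra*sa^2*w^4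
      + 24*qa*ra^2*sa*w^3 - 16*qa*ra^3*w^2 - 9*qa^2*sa^2*w^4
      + 36*qa^2*ra*sa*w^3 - 36*qa^2*ra^2*w^2 - 4*pa*sa^3*w^4
      + 24*pa*ra*sa^2*w^3 - 48*pa*ra^2*sa*w^2 + 32*pa*ra^3*w
      + 36*pa*qa*sa^2*w^3 - 144*pa*qa*ra*sa*w^2
      + 144*pa*qa*ra^2*w - 36*pa^2*sa^2*w^2
      + 144*pa^2*ra*sa*w - 144*pa^2*ra^2)*hw
  -- case analysis on which null line A(0,1) and A(2,-√3) land on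
  have hqcase : qa = 0 ∨ 3*qa + 2*w*sa = 0 := by
    rcases mul_eq_zero.mp hqfact with h | h
    · rcases mul_eq_zero.mp h with h' | h'
      · exact Or.inl h'
      · exfalso
        have hmid : 3*qa - w*sa = 0 := pow_eq_zero_iff (by norm_num) |>.mp h'
        apply hdet
        linear_combination (-(pa*sa + w*qa*sa)/3)*hw
          + (-(w*pa + w^2*qa)/3)*hmid + (-qa)*hbeta
    · exact Or.inr h
  have hucase : 2*pa - w*qa = 0
      ∨ 3*(2*pa - w*qa) + 2*w*(2*ra - w*sa) = 0 := by
    rcases mul_eq_zero.mp hufact with h | h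
    · rcases mul_eq_zero.mp h with h' | h'
      · exact Or.inl h'
      · exfalso
        have hmid : 3*(2*pa - w*qa) - w*(2*ra - w*sa) = 0 :=
          pow_eq_zero_iff (by norm_num) |>.mp h'
        apply hdet
        linear_combination ((pa + w*qa)/9)*hmid
          + ((w*(2*pa - w*qa))/9)*hbeta
          + (((pa + w*qa)*(2*pa - w*qa) - 3*(pa*sa - qa*ra))/9)*hw
    · exact Or.inr h
  rcases hqcase with hq0 | hqq3
  · rcases hucase with hu0 | hr3
    · exfalso
      exact hdet (by linear_combination (sa/2)*hu0 + (sa*w/2 - ra)*hq0)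
    · -- the identity case
      have hps : pa = sa := by
        linear_combination (1/18)*hr3 + (-(w)/2)*hq0 + (-(2*w)/9)*hbeta
          + (-(1/18))*(4*pa + 4*w*qa - 6*sa)*hw
      have hr0 : ra = 0 := by
        linear_combination w*hps + w^2*hq0 + hbeta
      have hp4 : pa^4 = 1 := by
        linear_combination e0 + (pa^2*ra - (2/9)*w*pa*ra^2)*hr0
      have hp1 : pa = 1 := by
        have hfac : (pa - 1)*((pa + 1)*(pa^2 + 1)) = 0 := by linear_combination hp4
        rcases mul_eq_zero.mp hfac with h | h
        · linarith
        · nlinarith [hApos, sq_nonneg pa]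
      have hs1 : sa = 1 := hps ▸ hp1
      exact ⟨hp1, hq0, hr0, hs1⟩
  · rcases hucase with hu0 | hr3
    · -- the "swap" case: contradicts ra < √3 pa
      exfalso
      have hsum : pa + sa = 0 := by
        linear_combination (1/2)*hu0 + (w/6)*hqq3 + (-(sa)/3)*hw
      have hr4 : ra = 4*w*pa := by
        linear_combination hbeta + hqq3 + qa*hw + (-3*w)*hsum
      rw [hr4] at hAr
      nlinarith [mul_pos hwpos hApos]
    · exfalso
      exact hdet (by linear_combination (sa/6)*hr3 + (-(2*ra - w*sa)/6)*hqq3)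

section main2
open Set

lemma mulvec2 (A : Matrix (Fin 2) (Fin 2) ℝ) (v : Fin 2 → ℝ) :
    A.mulVec v = ![A 0 0 * v 0 + A 0 1 * v 1, A 1 0 * v 0 + A 1 1 * v 1] := by
  funext i
  fin_cases i <;> simp [Matrix.mulVec, dotProduct, Fin.sum_univ_two]

set_option maxHeartbeats 1600000 in
lemma part1 (A : Matrix (Fin 2) (Fin 2) ℝ) (hA : IsUnit A)
    (hImg : A.mulVec '' connectedComponentIn Sset ![1, 0]
      = connectedComponentIn Sset ![1, 0]) : A = 1 := by
  have hdetU : IsUnit A.det := (Matrix.isUnit_iff_isUnit_det A).mp hA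
  rw [Matrix.det_fin_two] at hdetU
  set pa := A 0 0 with hpa
  set qa := A 0 1 with hqa
  set ra := A 1 0 with hra
  set sa := A 1 1 with hsa
  have hdet : pa * sa - qa * ra ≠ 0 := isUnit_iff_ne_zero.mp hdetU
  have hmaps : ∀ v ∈ connectedComponentIn Sset ![1, 0],
      A.mulVec v ∈ connectedComponentIn Sset ![1, 0] := by
    intro v hv; rw [← hImg]; exact mem_image_of_mem _ hv
  have hbase := hmaps _ base_mem_H
  have hbase' : A.mulVec ![1, 0] = ![pa, ra] := by
    rw [mulvec2]; norm_num; exact ⟨rfl, rfl⟩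
  rw [hbase'] at hbase
  have hApos : 0 < pa := by simpa using pos_fst hbase
  have hAr : ra < Real.sqrt 3 * pa := by simpa using slope_lt hbase
  have hval : ∀ t ∈ Icc (0:ℝ) 1,
      (pa + qa*t)^4 - (pa + qa*t)^2*(ra + sa*t)^2
        + (2*Real.sqrt 3/9)*(pa + qa*t)*(ra + sa*t)^3
      = 1 - t^2 + (2*Real.sqrt 3/9)*t^3 := by
    intro t ht
    have hmem := (H_subset (hmaps _ (Phi_mem_H ht))).1
    have hAv : A.mulVec (Phi t) = ![(pa + qa*t) * xf t, (ra + sa*t) * xf t] := by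
      rw [mulvec2]
      funext i
      fin_cases i <;> (simp [Phi]; ring)
    rw [hAv, hLK, Lval] at hmem
    simp only [Matrix.cons_val_zero, Matrix.cons_val_one, Matrix.head_cons] at hmem
    have h4 := xf_quart ht
    have hxne : xf t ≠ 0 := (xf_pos ht).ne'
    have key : xf t ^ 4 * ((pa + qa*t)^4 - (pa + qa*t)^2*(ra + sa*t)^2
        + (2*Real.sqrt 3/9)*(pa + qa*t)*(ra + sa*t)^3)
        = xf t ^ 4 * (1 - t^2 + (2*Real.sqrt 3/9)*t^3) := by
      rw [h4]
      linear_combination hmem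
    exact mul_left_cancel₀ (pow_ne_zero 4 hxne) key
  have h0 := hval 0 (by norm_num)
  have h1 := hval (1/4) (by norm_num)
  have h2 := hval (1/2) (by norm_num)
  have h3 := hval (3/4) (by norm_num)
  have h4 := hval 1 (by norm_num)
  have e0 : pa^4 - pa^2*ra^2 + (2/9)*Real.sqrt 3*pa*ra^3 - 1 = 0 := by
    linear_combination h0
  have e1 : 4*pa^3*qa - 2*pa*qa*ra^2 - 2*pa^2*ra*sa + (2/9)*Real.sqrt 3*qa*ra^3
      + (2/3)*Real.sqrt 3*pa*ra^2*sa = 0 := by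
    linear_combination (-25/3)*h0 + 16*h1 - 12*h2 + (16/3)*h3 - h4
  have e2 : 6*pa^2*qa^2 - qa^2*ra^2 - 4*pa*qa*ra*sa - pa^2*sa^2
      + (2/3)*Real.sqrt 3*qa*ra^2*sa + (2/3)*Real.sqrt 3*pa*ra*sa^2 + 1 = 0 := by
    linear_combination (70/3)*h0 - (208/3)*h1 + 76*h2 - (112/3)*h3 + (22/3)*h4
  have e3 : 4*pa*qa^3 - 2*qa^2*ra*sa - 2*pa*qa*sa^2 + (2/3)*Real.sqrt 3*qa*ra*sa^2
      + (2/9)*Real.sqrt 3*pa*sa^3 - (2/9)*Real.sqrt 3 = 0 := by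
    linear_combination (-80/3)*h0 + 96*h1 - 128*h2 + (224/3)*h3 - 16*h4
  have e4 : qa^4 - qa^2*sa^2 + (2/9)*Real.sqrt 3*qa*sa^3 = 0 := by
    linear_combination (32/3)*h0 - (128/3)*h1 + 64*h2 - (128/3)*h3 + (32/3)*h4
  obtain ⟨hp1, hq0, hr0, hs1⟩ := algMain (Real.sqrt 3) pa qa ra sa sq3_sq sq3_pos
    hdet hApos hAr e0 e1 e2 e3 e4
  ext i j
  fin_cases i <;> fin_cases j <;>
    simp only [Matrix.one_apply, ← hpa, ← hqa, ← hra, ← hsa] <;> norm_num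
  · exact hp1
  · exact hq0
  · exact hr0
  · exact hs1

lemma Hcurve_eq : Hcurve (2 / (3 * Real.sqrt 3)) 0 = connectedComponentIn Sset ![1, 0] := rfl

end main2

/-- **Triviality of the curve-preserving group and inhomogeneity of
`x⁴ − x²y² + (2/(3√3))xy³ = 1`.**
Every `A ∈ GL(2,ℝ)` with `A(H_{2/(3√3),0}) = H_{2/(3√3),0}` is the identity; in particular
the group of linear transformations preserving `H_{2/(3√3),0}` does not act transitively
on it. -/
theorem curve_c_trivial_automorphisms_and_inhomogeneous :
    (∀ A : Matrix (Fin 2) (Fin 2) ℝ, IsUnit A →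
      A.mulVec '' Hcurve (2 / (3 * Real.sqrt 3)) 0 = Hcurve (2 / (3 * Real.sqrt 3)) 0 →
      A = 1) ∧
    ¬ (∀ p ∈ Hcurve (2 / (3 * Real.sqrt 3)) 0, ∀ q ∈ Hcurve (2 / (3 * Real.sqrt 3)) 0,
        ∃ A : Matrix (Fin 2) (Fin 2) ℝ, IsUnit A ∧
          A.mulVec '' Hcurve (2 / (3 * Real.sqrt 3)) 0 = Hcurve (2 / (3 * Real.sqrt 3)) 0 ∧
          A.mulVec p = q) := by
  constructor
  · intro A hA hImg
    exact part1 A hA (by rw [← Hcurve_eq]; exact hImg)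
  · intro htrans
    have h1 : (![1, 0] : Fin 2 → ℝ) ∈ Hcurve (2 / (3 * Real.sqrt 3)) 0 := by
      rw [Hcurve_eq]; exact base_mem_H
    have h2 : Phi 1 ∈ Hcurve (2 / (3 * Real.sqrt 3)) 0 := by
      rw [Hcurve_eq]; exact Phi_mem_H (by norm_num)
    obtain ⟨A, hU, hpres, heq⟩ := htrans _ h1 _ h2
    rw [part1 A hU (by rw [← Hcurve_eq]; exact hpres), Matrix.one_mulVec] at heq
    have hco := congrFun heq 1
    have hx := xf_pos (t := 1) (by norm_num : (1:ℝ) ∈ Set.Icc (0:ℝ) 1)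
    simp [Phi] at hco
    rw [← hco] at hx
    exact lt_irrefl 0 hx
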